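/- Let F be an algebraically closed field, β₁, α₈, β₈ ∈ F with β₁ ≠ 0 and α₈ ≠ 0, and e₁ = (1,0,0). Then for all integers k₁, k₂ ≥ 2 and every A ∈ O(F), there exist X, Y ∈ O(F) with A = (0, 0; 0, α₈)·X^{k₁} + (β₁, e₁; 0, β₈)·Y^{k₂}. -/

import Mathlib

/-- Zorn vector matrices: the split octonion algebra over `F`. -/
structure Oct (F : Type*) where
  a : F              -- upper-left scalar η
  b : Fin 3 → F      -- upper-right vector x
  c : Fin 3 → F      -- lower-left vector y
  d : F              -- lower-right scalar ζ

namespace Oct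

variable {F : Type*} [Field F]

/-- standard bilinear form on F^3 -/
def dot (x y : Fin 3 → F) : F := x 0 * y 0 + x 1 * y 1 + x 2 * y 2

/-- cross product on F^3, satisfying ⟨x ∧ y, z⟩ = det(x,y,z) -/
def cross (x y : Fin 3 → F) : Fin 3 → F :=
  ![x 1 * y 2 - x 2 * y 1, x 2 * y 0 - x 0 * y 2, x 0 * y 1 - x 1 * y 0]

instance : Add (Oct F) :=
  ⟨fun A B => ⟨A.a + B.a, A.b + B.b, A.c + B.c, A.d + B.d⟩⟩

instance : Mul (Oct F) :=
  ⟨fun A B =>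
    ⟨A.a * B.a + dot A.b B.c,
     A.a • B.b + B.d • A.b + cross A.c B.c,
     A.d • B.c + B.a • A.c + cross A.b B.b,
     A.d * B.d + dot A.c B.b⟩⟩

instance : SMul F (Oct F) :=
  ⟨fun t A => ⟨t * A.a, t • A.b, t • A.c, t * A.d⟩⟩

instance : One (Oct F) := ⟨⟨1, 0, 0, 1⟩⟩

/-- powers, via A^{n+1} = A · A^n (well-defined by power-associativity) -/
def pow (A : Oct F) : ℕ → Oct F
  | 0 => 1
  | n + 1 => A * pow A n

/-- octonion conjugation -/
def conj (A : Oct F) : Oct F := ⟨A.d, -A.b, -A.c, A.a⟩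

/-- the norm form -/
def norm (A : Oct F) : F := A.a * A.d - dot A.b A.c
variable {F : Type*} [Field F]

@[simp] lemma mul_a' (A B : Oct F) : (A * B).a = A.a * B.a + dot A.b B.c := rfl
@[simp] lemma mul_b' (A B : Oct F) : (A * B).b = A.a • B.b + B.d • A.b + cross A.c B.c := rfl
@[simp] lemma mul_c' (A B : Oct F) : (A * B).c = A.d • B.c + B.a • A.c + cross A.b B.b := rfl
@[simp] lemma mul_d' (A B : Oct F) : (A * B).d = A.d * B.d + dot A.c B.b := rfl
@[simp] lemma add_a' (A B : Oct F) : (A + B).a = A.a + B.a := rfl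
@[simp] lemma add_b' (A B : Oct F) : (A + B).b = A.b + B.b := rfl
@[simp] lemma add_c' (A B : Oct F) : (A + B).c = A.c + B.c := rfl
@[simp] lemma add_d' (A B : Oct F) : (A + B).d = A.d + B.d := rfl
@[simp] lemma smul_a' (t : F) (A : Oct F) : (t • A).a = t * A.a := rfl
@[simp] lemma smul_b' (t : F) (A : Oct F) : (t • A).b = t • A.b := rfl
@[simp] lemma smul_c' (t : F) (A : Oct F) : (t • A).c = t • A.c := rfl
@[simp] lemma smul_d' (t : F) (A : Oct F) : (t • A).d = t * A.d := rfl
@[simp] lemma one_a' : (1 : Oct F).a = 1 := rfl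
@[simp] lemma one_b' : (1 : Oct F).b = 0 := rfl
@[simp] lemma one_c' : (1 : Oct F).c = 0 := rfl
@[simp] lemma one_d' : (1 : Oct F).d = 1 := rfl

lemma ext' {A B : Oct F} (h1 : A.a = B.a) (h2 : A.b = B.b) (h3 : A.c = B.c)
    (h4 : A.d = B.d) : A = B := by
  cases A; cases B; simp_all

@[simp] lemma dot_zero_left (y : Fin 3 → F) : dot 0 y = 0 := by simp [dot]
@[simp] lemma dot_zero_right (x : Fin 3 → F) : dot x 0 = 0 := by simp [dot]
@[simp] lemma cross_zero_left (y : Fin 3 → F) : cross 0 y = 0 := by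
  funext i; fin_cases i <;> simp [cross]
@[simp] lemma cross_zero_right (x : Fin 3 → F) : cross x 0 = 0 := by
  funext i; fin_cases i <;> simp [cross]
@[simp] lemma cross_self (x : Fin 3 → F) : cross x x = 0 := by
  funext i; fin_cases i <;> simp [cross] <;> ring

lemma dot_smul_right (t : F) (x y : Fin 3 → F) : dot x (t • y) = t * dot x y := by
  simp [dot]; ring
lemma dot_smul_left (t : F) (x y : Fin 3 → F) : dot (t • x) y = t * dot x y := by
  simp [dot]; ring
lemma cross_smul_right (t : F) (x y : Fin 3 → F) : cross x (t • y) = t • cross x y := by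
  funext i; fin_cases i <;> simp [cross] <;> ring
lemma cross_smul_left (t : F) (x y : Fin 3 → F) : cross (t • x) y = t • cross x y := by
  funext i; fin_cases i <;> simp [cross] <;> ring

lemma smul_mul' (t : F) (A B : Oct F) : (t • A) * B = t • (A * B) := by
  refine ext' ?_ ?_ ?_ ?_
  · simp [dot_smul_left]; ring
  · funext i; simp [cross_smul_left, Pi.smul_apply, smul_eq_mul]; ring
  · funext i; simp [cross_smul_left, Pi.smul_apply, smul_eq_mul]; ring
  · simp [dot_smul_left]; ring

lemma mul_smul' (t : F) (A B : Oct F) : A * (t • B) = t • (A * B) := by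
  refine ext' ?_ ?_ ?_ ?_
  · simp [dot_smul_right]; ring
  · funext i; simp [cross_smul_right, Pi.smul_apply, smul_eq_mul]; ring
  · funext i; simp [cross_smul_right, Pi.smul_apply, smul_eq_mul]; ring
  · simp [dot_smul_right]; ring

lemma smul_smul'' (s t : F) (A : Oct F) : s • (t • A) = (s * t) • A := by
  apply ext' <;> simp [smul_smul] <;> ring

lemma one_smul'' (A : Oct F) : (1 : F) • A = A := by
  apply ext' <;> simp

lemma mul_one'' (A : Oct F) : A * 1 = A := by
  apply ext' <;> simp

lemma sq_of_norm_zero {Z : Oct F} (h : norm Z = 0) : Z * Z = (Z.a + Z.d) • Z := by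
  have hd : dot Z.b Z.c = Z.a * Z.d := by
    unfold norm at h; linear_combination -h
  have hd' : dot Z.c Z.b = Z.a * Z.d := by
    unfold dot at hd ⊢; linear_combination hd
  refine ext' ?_ ?_ ?_ ?_
  · simp [hd]; ring
  · funext i; simp [Pi.smul_apply, smul_eq_mul]; ring
  · funext i; simp [Pi.smul_apply, smul_eq_mul]; ring
  · simp [hd']; ring

lemma pow_of_norm_zero {Z : Oct F} (h : norm Z = 0) :
    ∀ n : ℕ, pow Z (n + 1) = ((Z.a + Z.d) ^ n) • Z := by
  intro n
  induction n with
  | zero => simp [pow, mul_one'', one_smul'']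
  | succ m ih =>
      show Z * pow Z (m + 1) = _
      rw [ih, mul_smul', sq_of_norm_zero h, smul_smul'']
      congr 1; ring

lemma pow_smul'' (t : F) (Z : Oct F) : ∀ n : ℕ, pow (t • Z) n = (t ^ n) • pow Z n := by
  intro n
  induction n with
  | zero => simp [pow, one_smul'']
  | succ m ih =>
      show (t • Z) * pow (t • Z) m = t ^ (m + 1) • (Z * pow Z m)
      rw [ih, smul_mul', mul_smul', smul_smul'']
      congr 1; ring

lemma exists_pow_eq [IsAlgClosed F] {k : ℕ} (hk : k ≠ 0) {Z : Oct F}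
    (h0 : norm Z = 0) (hs : Z.a + Z.d ≠ 0) : ∃ Y : Oct F, pow Y k = Z := by
  obtain ⟨m, rfl⟩ : ∃ m, k = m + 1 := ⟨k - 1, by omega⟩
  set s := Z.a + Z.d with hsdef
  obtain ⟨t, ht⟩ := IsAlgClosed.exists_pow_nat_eq (k := F) s (n := m + 1) (by omega)
  have ht0 : t ≠ 0 := by
    rintro rfl; simp at ht; exact hs ht.symm
  refine ⟨(t / s) • Z, ?_⟩
  rw [pow_smul'', pow_of_norm_zero h0, smul_smul'']
  have : (t / s) ^ (m + 1) * s ^ m = 1 := by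
    rw [div_pow, ht, div_mul_eq_mul_div, div_eq_one_iff_eq (pow_ne_zero _ hs)]; ring
  rw [this, one_smul'']


/-- Construction for the `B`-term: a norm-zero, nonzero-trace `Z` with prescribed
upper row of `B * Z`. -/
lemma exists_Z2 (β₁ β₈ : F) (hβ₁ : β₁ ≠ 0) (a : F) (b : Fin 3 → F) :
    ∃ Z : Oct F, norm Z = 0 ∧ Z.a + Z.d ≠ 0 ∧
      ((⟨β₁, ![1, 0, 0], 0, β₈⟩ : Oct F) * Z).a = a ∧
      ((⟨β₁, ![1, 0, 0], 0, β₈⟩ : Oct F) * Z).b = b := by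
  by_cases hb0 : b 0 = 0
  · refine ⟨⟨1, ![0, b 1 / β₁, b 2 / β₁], ![a - β₁, b 2, -(b 1)], 0⟩, ?_, ?_, ?_, ?_⟩
    · simp [norm, dot]; field_simp; ring
    · simp
    · simp [dot]
    · funext i; fin_cases i <;> simp [cross, Pi.smul_apply, hb0] <;> field_simp
  · refine ⟨⟨0, ![0, b 1 / β₁, b 2 / β₁], ![a, b 2, -(b 1)], b 0⟩, ?_, ?_, ?_, ?_⟩
    · simp [norm, dot]; ring
    · simpa using hb0
    · simp [dot]
    · funext i; fin_cases i <;> simp [cross, Pi.smul_apply] <;> field_simp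
  
/-- Construction for the `D`-term: a norm-zero, nonzero-trace `Z` with
`D * Z = ⟨0, 0, v, s⟩`. -/
lemma exists_Z1 (α₈ : F) (hα₈ : α₈ ≠ 0) (v : Fin 3 → F) (s : F) :
    ∃ Z : Oct F, norm Z = 0 ∧ Z.a + Z.d ≠ 0 ∧
      (⟨0, 0, 0, α₈⟩ : Oct F) * Z = ⟨0, 0, v, s⟩ := by
  by_cases hs : s = 0
  · refine ⟨⟨1, 0, α₈⁻¹ • v, 0⟩, ?_, ?_, ?_⟩
    · simp [norm]
    · simp
    · apply ext' <;> simp [hs, smul_smul, hα₈]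
  · refine ⟨⟨0, 0, α₈⁻¹ • v, s / α₈⟩, ?_, ?_, ?_⟩
    · simp [norm]
    · simpa [hα₈] using hs
    · apply ext' <;> simp [smul_smul, hα₈] <;> field_simp

end Oct
open Oct
theorem stmt_9 {F : Type*} [Field F] [IsAlgClosed F] (β₁ α₈ β₈ : F)
    (hβ₁ : β₁ ≠ 0) (hα₈ : α₈ ≠ 0) (k₁ k₂ : ℕ) (hk₁ : 2 ≤ k₁) (hk₂ : 2 ≤ k₂)
    (A : Oct F) :
    ∃ X Y : Oct F,
      A = (⟨0, 0, 0, α₈⟩ : Oct F) * pow X k₁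
        + (⟨β₁, ![1, 0, 0], 0, β₈⟩ : Oct F) * pow Y k₂ := by
  obtain ⟨Z₂, h2n, h2t, h2a, h2b⟩ := exists_Z2 β₁ β₈ hβ₁ A.a A.b
  obtain ⟨Y, hY⟩ := exists_pow_eq (k := k₂) (by omega) h2n h2t
  set C : Oct F := (⟨β₁, ![1, 0, 0], 0, β₈⟩ : Oct F) * Z₂ with hC
  obtain ⟨Z₁, h1n, h1t, h1e⟩ := exists_Z1 α₈ hα₈ (A.c - C.c) (A.d - C.d)
  obtain ⟨X, hX⟩ := exists_pow_eq (k := k₁) (by omega) h1n h1t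
  refine ⟨X, Y, ?_⟩
  rw [hX, hY, h1e, ← hC]
  apply ext' <;> simp [h2a, h2b]
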